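/- For c > 0 and b ≠ 0, with τ(t) = log(1+2bct), the curve σ(t) = ((√(1+2bct)/b)(bu cos(τ(t)/(2c)) + (a−bcu) sin(τ(t)/(2c))), v + τ(t)/(2c)), defined on {t : 1+2bct > 0}, satisfies the geodesic equations ẍ¹ + (1+c²)x¹(ẋ²)² = 0, ẍ² + 2c(ẋ²)² = 0 of M(c), with σ(0)=(u,v) and σ'(0)=(a,b). -/

import Mathlib

open Real

/-- `τ(t) = log(1+2bct)`. -/
noncomputable def τ (b c t : ℝ) : ℝ := Real.log (1 + 2 * b * c * t)

/-- The candidate geodesic of `M(c)` with initial position `(u,v)` and initial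
velocity `(a,b)`, for `b ≠ 0`. -/
noncomputable def σ (c u v a b : ℝ) : ℝ → ℝ × ℝ := fun t =>
  ((Real.sqrt (1 + 2 * b * c * t) / b) *
      (b * u * Real.cos (τ b c t / (2 * c))
        + (a - b * c * u) * Real.sin (τ b c t / (2 * c))),
    v + τ b c t / (2 * c))


noncomputable def Sf (c u a b t : ℝ) : ℝ :=
  b*u * Real.cos (Real.log (1+2*b*c*t)/(2*c)) + (a - b*c*u) * Real.sin (Real.log (1+2*b*c*t)/(2*c))
noncomputable def Tf (c u a b t : ℝ) : ℝ :=
  -(b*u) * Real.sin (Real.log (1+2*b*c*t)/(2*c)) + (a - b*c*u) * Real.cos (Real.log (1+2*b*c*t)/(2*c))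

lemma hasDerivAt_g (b c t : ℝ) : HasDerivAt (fun s => 1 + 2*b*c*s) (2*b*c) t := by
  simpa using ((hasDerivAt_id t).const_mul (2*b*c)).const_add 1

lemma hasDerivAt_theta (b c t : ℝ) (hc : c ≠ 0) (ht : 0 < 1+2*b*c*t) :
    HasDerivAt (fun s => Real.log (1+2*b*c*s) / (2*c)) (b / (1+2*b*c*t)) t := by
  have h := ((hasDerivAt_g b c t).log ht.ne').div_const (2*c)
  refine h.congr_deriv ?_
  field_simp

lemma hasDerivAt_S (c u a b t : ℝ) (hc : c ≠ 0) (ht : 0 < 1+2*b*c*t) :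
    HasDerivAt (Sf c u a b) (Tf c u a b t * (b / (1+2*b*c*t))) t := by
  have hθ := hasDerivAt_theta b c t hc ht
  have h := ((hθ.cos.const_mul (b*u)).add (hθ.sin.const_mul (a - b*c*u)))
  refine h.congr_deriv ?_
  simp [Tf]; ring

lemma hasDerivAt_T (c u a b t : ℝ) (hc : c ≠ 0) (ht : 0 < 1+2*b*c*t) :
    HasDerivAt (Tf c u a b) (-(Sf c u a b t) * (b / (1+2*b*c*t))) t := by
  have hθ := hasDerivAt_theta b c t hc ht
  have h := ((hθ.sin.const_mul (-(b*u))).add (hθ.cos.const_mul (a - b*c*u)))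
  refine h.congr_deriv ?_
  simp [Sf]; ring

lemma hasDerivAt_sqrtg (b c t : ℝ) (ht : 0 < 1+2*b*c*t) :
    HasDerivAt (fun s => Real.sqrt (1+2*b*c*s)) (b*c / Real.sqrt (1+2*b*c*t)) t := by
  have h := (hasDerivAt_g b c t).sqrt ht.ne'
  refine h.congr_deriv ?_
  ring

lemma hasDerivAt_x2 (c u v a b t : ℝ) (hc : c ≠ 0) (ht : 0 < 1+2*b*c*t) :
    HasDerivAt (fun s => (σ c u v a b s).2) (b / (1+2*b*c*t)) t := by
  exact (hasDerivAt_theta b c t hc ht).const_add v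

lemma hasDerivAt_x1 (c u v a b t : ℝ) (hc : c ≠ 0) (hb : b ≠ 0) (ht : 0 < 1+2*b*c*t) :
    HasDerivAt (fun s => (σ c u v a b s).1)
      ((c * Sf c u a b t + Tf c u a b t) / Real.sqrt (1+2*b*c*t)) t := by
  have hS := hasDerivAt_S c u a b t hc ht
  have hr := hasDerivAt_sqrtg b c t ht
  have h := ((hr.div_const b).mul hS)
  have hfun : (fun s => (σ c u v a b s).1)
      = fun s => (Real.sqrt (1+2*b*c*s) / b) * Sf c u a b s := by
    funext s; simp [σ, τ, Sf]
  rw [hfun]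
  refine h.congr_deriv ?_
  have hrpos : 0 < Real.sqrt (1+2*b*c*t) := Real.sqrt_pos.2 ht
  set r := Real.sqrt (1+2*b*c*t) with hrdef
  have hsq : r*r = 1+2*b*c*t := Real.mul_self_sqrt ht.le
  rw [← hsq]
  field_simp

lemma hasDerivAt_f2 (b c t : ℝ) (ht : 0 < 1+2*b*c*t) :
    HasDerivAt (fun s => b/(1+2*b*c*s)) (-(2*b*b*c)/(1+2*b*c*t)^2) t := by
  have h := ((hasDerivAt_g b c t).inv ht.ne').const_mul b
  rw [show (fun s => b/(1+2*b*c*s)) = fun s => b*(1+2*b*c*s)⁻¹ from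
    funext fun s => div_eq_mul_inv b _]
  refine h.congr_deriv ?_
  ring

lemma hasDerivAt_f1 (c u a b t : ℝ) (hc : c ≠ 0) (ht : 0 < 1+2*b*c*t) :
    HasDerivAt (fun s => (c * Sf c u a b s + Tf c u a b s) / Real.sqrt (1+2*b*c*s))
      (-(b*(1+c^2)*Sf c u a b t)/((1+2*b*c*t) * Real.sqrt (1+2*b*c*t))) t := by
  have hS := hasDerivAt_S c u a b t hc ht
  have hT := hasDerivAt_T c u a b t hc ht
  have hr := hasDerivAt_sqrtg b c t ht
  have hrpos : 0 < Real.sqrt (1+2*b*c*t) := Real.sqrt_pos.2 ht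
  have hN := (hS.const_mul c).add hT
  have h := hN.div hr hrpos.ne'
  refine h.congr_deriv ?_
  set r := Real.sqrt (1+2*b*c*t) with hrdef
  have hsq : r*r = 1+2*b*c*t := Real.mul_self_sqrt ht.le
  rw [← hsq]
  field_simp
  simp only [Pi.add_apply]
  ring


/-- for `c > 0` and `b ≠ 0`, the curve `σ` satisfies the geodesic
equations `ẍ¹ + (1+c²)x¹(ẋ²)² = 0`, `ẍ² + 2c(ẋ²)² = 0` of `M(c)` on
`{t : 1+2bct > 0}`, with `σ(0) = (u,v)` and `σ'(0) = (a,b)`. -/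
theorem Mc_geodesic (c u v a b : ℝ) (hc : 0 < c) (hb : b ≠ 0) :
    (∀ t : ℝ, 0 < 1 + 2 * b * c * t →
      deriv (deriv fun s => (σ c u v a b s).1) t
          + (1 + c ^ 2) * (σ c u v a b t).1 *
              (deriv (fun s => (σ c u v a b s).2) t) ^ 2 = 0 ∧
      deriv (deriv fun s => (σ c u v a b s).2) t
          + 2 * c * (deriv (fun s => (σ c u v a b s).2) t) ^ 2 = 0) ∧
    σ c u v a b 0 = (u, v) ∧ deriv (σ c u v a b) 0 = (a, b) := by
  have hcne : c ≠ 0 := hc.ne'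
  refine ⟨fun t ht => ?_, ?_, ?_⟩
  · have hU : IsOpen {s : ℝ | 0 < 1 + 2*b*c*s} :=
      isOpen_lt continuous_const (by continuity)
    have hmem : {s : ℝ | 0 < 1 + 2*b*c*s} ∈ nhds t := hU.mem_nhds ht
    have hev1 : deriv (fun s => (σ c u v a b s).1) =ᶠ[nhds t]
        (fun s => (c * Sf c u a b s + Tf c u a b s) / Real.sqrt (1+2*b*c*s)) :=
      Filter.eventuallyEq_of_mem hmem (fun s hs => (hasDerivAt_x1 c u v a b s hcne hb hs).deriv)
    have hev2 : deriv (fun s => (σ c u v a b s).2) =ᶠ[nhds t]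
        (fun s => b/(1+2*b*c*s)) :=
      Filter.eventuallyEq_of_mem hmem (fun s hs => (hasDerivAt_x2 c u v a b s hcne hs).deriv)
    have hd1 : deriv (deriv fun s => (σ c u v a b s).1) t
        = -(b*(1+c^2)*Sf c u a b t)/((1+2*b*c*t) * Real.sqrt (1+2*b*c*t)) := by
      rw [hev1.deriv_eq]; exact (hasDerivAt_f1 c u a b t hcne ht).deriv
    have hd2 : deriv (deriv fun s => (σ c u v a b s).2) t
        = -(2*b*b*c)/(1+2*b*c*t)^2 := by
      rw [hev2.deriv_eq]; exact (hasDerivAt_f2 b c t ht).deriv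
    have hx2d : deriv (fun s => (σ c u v a b s).2) t = b/(1+2*b*c*t) :=
      (hasDerivAt_x2 c u v a b t hcne ht).deriv
    have hσ1 : (σ c u v a b t).1 = Real.sqrt (1+2*b*c*t) / b * Sf c u a b t := by
      simp [σ, τ, Sf]
    have hrpos : 0 < Real.sqrt (1+2*b*c*t) := Real.sqrt_pos.2 ht
    constructor
    · rw [hd1, hx2d, hσ1]
      set r := Real.sqrt (1+2*b*c*t) with hrdef
      have hsq : r*r = 1+2*b*c*t := Real.mul_self_sqrt ht.le
      rw [← hsq]
      field_simp
      ring
    · rw [hd2, hx2d]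
      field_simp
      ring
  · simp [σ, τ]
    field_simp
  · have h1 := hasDerivAt_x1 c u v a b 0 hcne hb (by norm_num)
    have h2 := hasDerivAt_x2 c u v a b 0 hcne (by norm_num)
    have hp : HasDerivAt (σ c u v a b)
        ((c * Sf c u a b 0 + Tf c u a b 0) / Real.sqrt (1+2*b*c*0), b/(1+2*b*c*0)) 0 := by
      have := h1.prodMk h2
      simpa using this
    rw [hp.deriv]
    have hS0 : Sf c u a b 0 = b*u := by simp [Sf]
    have hT0 : Tf c u a b 0 = a - b*c*u := by simp [Tf]
    rw [Prod.ext_iff]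
    constructor
    · simp [hS0, hT0]; ring
    · norm_num
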